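/- arXiv:1102.1475 — 3 statements merged into one kernel-verified Lean document; each statement's English description precedes it below -/
import Mathlib

section
/- Let V, X, Y, Z2 be random variables on finite alphabets such that V → X → (Y,Z2) is a Markov chain (i.e., (Y,Z2) is conditionally independent of V given X) and X → Y → Z2 is a Markov chain (Z2 is conditionally independent of X given Y). Then I(V;Y) − I(V;Z2) ≤ I(X;Y) − I(X;Z2). -/
open scoped BigOperators
noncomputable section

/-- A probability mass function on a finite type. -/
def IsPMF {α : Type*} [Fintype α] (p : α → ℝ) : Prop :=
  (∀ a, 0 ≤ p a) ∧ ∑ a, p a = 1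

/-- Mutual information (in bits) of a joint pmf on `α × β`. -/
def mutInfo {α β : Type*} [Fintype α] [Fintype β] (p : α × β → ℝ) : ℝ :=
  ∑ ab : α × β,
    p ab * Real.logb 2 (p ab / ((∑ b, p (ab.1, b)) * (∑ a, p (a, ab.2))))

set_option linter.unusedSectionVars false
namespace S12

lemma sc2 {A B : Type} [Fintype A] [Fintype B] (f : A → B → ℝ) :
    ∑ a, ∑ b, f a b = ∑ b, ∑ a, f a b := Finset.sum_comm

lemma sc3_12 {A B C : Type} [Fintype A] [Fintype B] [Fintype C] (f : A → B → C → ℝ) :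
    ∑ a, ∑ b, ∑ c, f a b c = ∑ b, ∑ a, ∑ c, f a b c := Finset.sum_comm

lemma sc3_23 {A B C : Type} [Fintype A] [Fintype B] [Fintype C] (f : A → B → C → ℝ) :
    ∑ a, ∑ b, ∑ c, f a b c = ∑ a, ∑ c, ∑ b, f a b c :=
  Finset.sum_congr rfl fun _ _ => Finset.sum_comm

lemma sc3_rot {A B C : Type} [Fintype A] [Fintype B] [Fintype C] (f : A → B → C → ℝ) :
    ∑ c, ∑ a, ∑ b, f a b c = ∑ a, ∑ b, ∑ c, f a b c := by
  rw [sc3_12]; exact Finset.sum_congr rfl fun _ _ => Finset.sum_comm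

lemma le_sum1 {A : Type} [Fintype A] (f : A → ℝ) (h : ∀ a, 0 ≤ f a) (a : A) :
    f a ≤ ∑ a', f a' := Finset.single_le_sum (fun i _ => h i) (Finset.mem_univ a)

lemma le_sum2 {A B : Type} [Fintype A] [Fintype B] (f : A → B → ℝ) (h : ∀ a b, 0 ≤ f a b)
    (a : A) (b : B) : f a b ≤ ∑ a', ∑ b', f a' b' :=
  (le_sum1 (f a) (h a) b).trans (le_sum1 _ (fun a' => Finset.sum_nonneg fun b' _ => h a' b') a)

lemma le_sum3 {A B C : Type} [Fintype A] [Fintype B] [Fintype C] (f : A → B → C → ℝ)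
    (h : ∀ a b c, 0 ≤ f a b c) (a : A) (b : B) (c : C) :
    f a b c ≤ ∑ a', ∑ b', ∑ c', f a' b' c' :=
  (le_sum2 (f a) (h a) b c).trans
    (le_sum1 _ (fun a' => Finset.sum_nonneg fun b' _ => Finset.sum_nonneg fun c' _ => h a' b' c') a)

variable {V X Y Z : Type} [Fintype V] [Fintype X] [Fintype Y] [Fintype Z]

def mV (p : V × X × Y × Z → ℝ) (v : V) : ℝ := ∑ x, ∑ y, ∑ z, p (v, x, y, z)
def mX (p : V × X × Y × Z → ℝ) (x : X) : ℝ := ∑ v, ∑ y, ∑ z, p (v, x, y, z)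
def mY (p : V × X × Y × Z → ℝ) (y : Y) : ℝ := ∑ v, ∑ x, ∑ z, p (v, x, y, z)
def mZ (p : V × X × Y × Z → ℝ) (z : Z) : ℝ := ∑ v, ∑ x, ∑ y, p (v, x, y, z)
def mVX (p : V × X × Y × Z → ℝ) (v : V) (x : X) : ℝ := ∑ y, ∑ z, p (v, x, y, z)
def mVY (p : V × X × Y × Z → ℝ) (v : V) (y : Y) : ℝ := ∑ x, ∑ z, p (v, x, y, z)
def mVZ (p : V × X × Y × Z → ℝ) (v : V) (z : Z) : ℝ := ∑ x, ∑ y, p (v, x, y, z)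
def mXY (p : V × X × Y × Z → ℝ) (x : X) (y : Y) : ℝ := ∑ v, ∑ z, p (v, x, y, z)
def mXZ (p : V × X × Y × Z → ℝ) (x : X) (z : Z) : ℝ := ∑ v, ∑ y, p (v, x, y, z)
def mYZ (p : V × X × Y × Z → ℝ) (y : Y) (z : Z) : ℝ := ∑ v, ∑ x, p (v, x, y, z)
def mVXY (p : V × X × Y × Z → ℝ) (v : V) (x : X) (y : Y) : ℝ := ∑ z, p (v, x, y, z)
def mVXZ (p : V × X × Y × Z → ℝ) (v : V) (x : X) (z : Z) : ℝ := ∑ y, p (v, x, y, z)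
def mVYZ (p : V × X × Y × Z → ℝ) (v : V) (y : Y) (z : Z) : ℝ := ∑ x, p (v, x, y, z)
def mXYZ (p : V × X × Y × Z → ℝ) (x : X) (y : Y) (z : Z) : ℝ := ∑ v, p (v, x, y, z)

section alg
variable (p : V × X × Y × Z → ℝ) (hp0 : ∀ q, 0 ≤ p q)
  (hM1 : ∀ v x y z, p (v, x, y, z) * mX p x = mVX p v x * mXYZ p x y z)
  (hM2 : ∀ x y z, mXYZ p x y z * mY p y = mXY p x y * mYZ p y z)

include hM1 in
lemma G1a : ∀ v x z, mVXZ p v x z * mX p x = mVX p v x * mXZ p x z := by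
  intro v x z
  calc mVXZ p v x z * mX p x = ∑ y, (p (v, x, y, z) * mX p x) := by
        rw [mVXZ, Finset.sum_mul]
    _ = ∑ y, (mVX p v x * mXYZ p x y z) := Finset.sum_congr rfl fun y _ => hM1 v x y z
    _ = mVX p v x * mXZ p x z := by
        rw [← Finset.mul_sum]; congr 1; rw [mXZ]
        exact (sc2 fun y v' => p (v', x, y, z)).symm ▸ rfl

include hM1 in
lemma G1b : ∀ v x y, mVXY p v x y * mX p x = mVX p v x * mXY p x y := by
  intro v x y
  calc mVXY p v x y * mX p x = ∑ z, (p (v, x, y, z) * mX p x) := by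
        rw [mVXY, Finset.sum_mul]
    _ = ∑ z, (mVX p v x * mXYZ p x y z) := Finset.sum_congr rfl fun z _ => hM1 v x y z
    _ = mVX p v x * mXY p x y := by
        rw [← Finset.mul_sum]; congr 1; rw [mXY]
        exact sc2 fun z v' => p (v', x, y, z)

include hp0 hM1 hM2 in
lemma G3 : ∀ v x y z, p (v, x, y, z) * mY p y = mVXY p v x y * mYZ p y z := by
  intro v x y z
  have hXnn : (0:ℝ) ≤ mX p x := Finset.sum_nonneg fun v' _ => Finset.sum_nonneg fun y' _ =>
    Finset.sum_nonneg fun z' _ => hp0 (v', x, y', z')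
  rcases eq_or_lt_of_le hXnn with hx | hx
  · have h1 : p (v, x, y, z) = 0 := le_antisymm (by
      calc p (v, x, y, z) ≤ mX p x := le_sum3 (fun v' y' z' => p (v', x, y', z'))
            (fun _ _ _ => hp0 _) v y z
        _ = 0 := hx.symm) (hp0 _)
    have h2 : mVXY p v x y = 0 := le_antisymm (by
      calc mVXY p v x y = ∑ z', p (v, x, y, z') := rfl
        _ ≤ mVX p v x := le_sum1 (fun y' => ∑ z', p (v, x, y', z'))
            (fun y' => Finset.sum_nonneg fun z' _ => hp0 _) y
        _ ≤ mX p x := le_sum1 (fun v' => mVX p v' x)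
            (fun v' => Finset.sum_nonneg fun y' _ => Finset.sum_nonneg fun z' _ => hp0 _) v
        _ = 0 := hx.symm)
      (Finset.sum_nonneg fun z' _ => hp0 _)
    rw [h1, h2, zero_mul, zero_mul]
  · apply mul_left_cancel₀ (ne_of_gt hx)
    have e1 := hM1 v x y z
    have e2 := hM2 x y z
    have e3 := G1b p hM1 v x y
    linear_combination mY p y * e1 + mVX p v x * e2 - mYZ p y z * e3

include hp0 hM1 hM2 in
lemma GN : ∀ v y z, mVYZ p v y z * mY p y = mVY p v y * mYZ p y z := by
  intro v y z
  calc mVYZ p v y z * mY p y = ∑ x, (p (v, x, y, z) * mY p y) := by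
        rw [mVYZ, Finset.sum_mul]
    _ = ∑ x, (mVXY p v x y * mYZ p y z) :=
        Finset.sum_congr rfl fun x _ => G3 p hp0 hM1 hM2 v x y z
    _ = mVY p v y * mYZ p y z := by
        rw [← Finset.sum_mul]; congr 1

include hp0 hM1 hM2 in
lemma GM : ∀ v x y z,
    p (v, x, y, z) * mXZ p x z * mVY p v y = mXY p x y * mVXZ p v x z * mVYZ p v y z := by
  intro v x y z
  have hXnn : (0:ℝ) ≤ mX p x := Finset.sum_nonneg fun v' _ => Finset.sum_nonneg fun y' _ =>
    Finset.sum_nonneg fun z' _ => hp0 _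
  have hYnn : (0:ℝ) ≤ mY p y := Finset.sum_nonneg fun v' _ => Finset.sum_nonneg fun x' _ =>
    Finset.sum_nonneg fun z' _ => hp0 _
  rcases eq_or_lt_of_le hXnn with hx | hx
  · have h1 : p (v, x, y, z) = 0 := le_antisymm
      (hx ▸ le_sum3 (fun v' y' z' => p (v', x, y', z')) (fun _ _ _ => hp0 _) v y z) (hp0 _)
    have h2 : mXY p x y = 0 := le_antisymm (by
      calc mXY p x y = ∑ v', ∑ z', p (v', x, y, z') := rfl
        _ ≤ ∑ v', ∑ y', ∑ z', p (v', x, y', z') := Finset.sum_le_sum fun v' _ =>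
            le_sum1 (fun y' => ∑ z', p (v', x, y', z'))
              (fun y' => Finset.sum_nonneg fun z' _ => hp0 _) y
        _ = 0 := hx.symm)
      (Finset.sum_nonneg fun v' _ => Finset.sum_nonneg fun z' _ => hp0 _)
    rw [h1, h2, zero_mul, zero_mul, zero_mul, zero_mul]
  rcases eq_or_lt_of_le hYnn with hy | hy
  · have h1 : p (v, x, y, z) = 0 := le_antisymm
      (hy ▸ le_sum3 (fun v' x' z' => p (v', x', y, z')) (fun _ _ _ => hp0 _) v x z) (hp0 _)
    have h2 : mXY p x y = 0 := le_antisymm (by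
      calc mXY p x y = ∑ v', ∑ z', p (v', x, y, z') := rfl
        _ ≤ ∑ v', ∑ x', ∑ z', p (v', x', y, z') := Finset.sum_le_sum fun v' _ =>
            le_sum1 (fun x' => ∑ z', p (v', x', y, z'))
              (fun x' => Finset.sum_nonneg fun z' _ => hp0 _) x
        _ = 0 := hy.symm)
      (Finset.sum_nonneg fun v' _ => Finset.sum_nonneg fun z' _ => hp0 _)
    rw [h1, h2, zero_mul, zero_mul, zero_mul, zero_mul]
  · apply mul_left_cancel₀ (ne_of_gt (mul_pos hx hy))
    have e1 := hM1 v x y z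
    have e2 := hM2 x y z
    have e3 := G1a p hM1 v x z
    have e4 := GN p hp0 hM1 hM2 v y z
    linear_combination (mY p y * mXZ p x z * mVY p v y) * e1 +
      (mVX p v x * mXZ p x z * mVY p v y) * e2 -
      (mY p y * mXY p x y * mVYZ p v y z) * e3 -
      (mVX p v x * mXZ p x z * mXY p x y) * e4


include hp0 hM1 hM2 in
lemma pointwise (v : V) (x : X) (y : Y) (z : Z) :
    (p (v, x, y, z) - mVXZ p v x z * mVYZ p v y z / mVZ p v z) / Real.log 2 ≤
    p (v, x, y, z) *
      (Real.logb 2 (mXY p x y / (mX p x * mY p y)) +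
        Real.logb 2 (mVZ p v z / (mV p v * mZ p z)) -
        Real.logb 2 (mVY p v y / (mV p v * mY p y)) -
        Real.logb 2 (mXZ p x z / (mX p x * mZ p z))) := by
  have hL2 : (0:ℝ) < Real.log 2 := Real.log_pos one_lt_two
  have hgnn : (0:ℝ) ≤ mVXZ p v x z * mVYZ p v y z / mVZ p v z :=
    div_nonneg (mul_nonneg (Finset.sum_nonneg fun _ _ => hp0 _)
      (Finset.sum_nonneg fun _ _ => hp0 _))
      (Finset.sum_nonneg fun _ _ => Finset.sum_nonneg fun _ _ => hp0 _)
  rcases eq_or_lt_of_le (hp0 (v, x, y, z)) with hA | hA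
  · rw [← hA, zero_mul, zero_sub]
    exact div_nonpos_of_nonpos_of_nonneg (by linarith) hL2.le
  · -- positivity of all marginals
    have hmV : 0 < mV p v := hA.trans_le (le_sum3 (fun x' y' z' => p (v, x', y', z'))
      (fun _ _ _ => hp0 _) x y z)
    have hmX : 0 < mX p x := hA.trans_le (le_sum3 (fun v' y' z' => p (v', x, y', z'))
      (fun _ _ _ => hp0 _) v y z)
    have hmY : 0 < mY p y := hA.trans_le (le_sum3 (fun v' x' z' => p (v', x', y, z'))
      (fun _ _ _ => hp0 _) v x z)
    have hmZ : 0 < mZ p z := hA.trans_le (le_sum3 (fun v' x' y' => p (v', x', y', z))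
      (fun _ _ _ => hp0 _) v x y)
    have hmVY : 0 < mVY p v y := hA.trans_le (le_sum2 (fun x' z' => p (v, x', y, z'))
      (fun _ _ => hp0 _) x z)
    have hmVZ : 0 < mVZ p v z := hA.trans_le (le_sum2 (fun x' y' => p (v, x', y', z))
      (fun _ _ => hp0 _) x y)
    have hmXY : 0 < mXY p x y := hA.trans_le (le_sum2 (fun v' z' => p (v', x, y, z'))
      (fun _ _ => hp0 _) v z)
    have hmXZ : 0 < mXZ p x z := hA.trans_le (le_sum2 (fun v' y' => p (v', x, y', z))
      (fun _ _ => hp0 _) v y)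
    have hmVXZ : 0 < mVXZ p v x z := hA.trans_le (le_sum1 (fun y' => p (v, x, y', z))
      (fun _ => hp0 _) y)
    have hmVYZ : 0 < mVYZ p v y z := hA.trans_le (le_sum1 (fun x' => p (v, x', y, z))
      (fun _ => hp0 _) x)
    set t : ℝ := mXY p x y * mVZ p v z / (mXZ p x z * mVY p v y) with ht_def
    have ht : 0 < t := div_pos (mul_pos hmXY hmVZ) (mul_pos hmXZ hmVY)
    have hcomb :
        Real.logb 2 (mXY p x y / (mX p x * mY p y)) +
          Real.logb 2 (mVZ p v z / (mV p v * mZ p z)) -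
          Real.logb 2 (mVY p v y / (mV p v * mY p y)) -
          Real.logb 2 (mXZ p x z / (mX p x * mZ p z)) = Real.logb 2 t := by
      rw [ht_def, Real.logb_div hmXY.ne' (mul_pos hmX hmY).ne',
        Real.logb_div hmVZ.ne' (mul_pos hmV hmZ).ne',
        Real.logb_div hmVY.ne' (mul_pos hmV hmY).ne',
        Real.logb_div hmXZ.ne' (mul_pos hmX hmZ).ne',
        Real.logb_div (mul_pos hmXY hmVZ).ne' (mul_pos hmXZ hmVY).ne',
        Real.logb_mul hmX.ne' hmY.ne', Real.logb_mul hmV.ne' hmZ.ne',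
        Real.logb_mul hmV.ne' hmY.ne', Real.logb_mul hmX.ne' hmZ.ne',
        Real.logb_mul hmXY.ne' hmVZ.ne', Real.logb_mul hmXZ.ne' hmVY.ne']
      ring
    have hlogt : 1 - 1/t ≤ Real.log t := by
      have h := Real.log_le_sub_one_of_pos (one_div_pos.mpr ht)
      rw [one_div, Real.log_inv, ← one_div t] at h
      linarith
    have key : p (v, x, y, z) / t = mVXZ p v x z * mVYZ p v y z / mVZ p v z := by
      rw [ht_def, div_div_eq_mul_div, div_eq_div_iff (mul_pos hmXY hmVZ).ne' hmVZ.ne']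
      have hGM := GM p hp0 hM1 hM2 v x y z
      linear_combination mVZ p v z * hGM
    rw [hcomb]
    calc (p (v, x, y, z) - mVXZ p v x z * mVYZ p v y z / mVZ p v z) / Real.log 2
        = p (v, x, y, z) * (1 - 1/t) / Real.log 2 := by
          rw [mul_sub, mul_one, mul_one_div, key]
      _ ≤ p (v, x, y, z) * Real.log t / Real.log 2 := by
          exact div_le_div_of_nonneg_right (mul_le_mul_of_nonneg_left hlogt hA.le) hL2.le
      _ = p (v, x, y, z) * Real.logb 2 t := by
          rw [mul_div_assoc, Real.log_div_log]

lemma sumg :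
    ∑ v, ∑ x, ∑ y, ∑ z, mVXZ p v x z * mVYZ p v y z / mVZ p v z =
    ∑ v, ∑ x, ∑ y, ∑ z, p (v, x, y, z) := by
  refine Finset.sum_congr rfl fun v _ => ?_
  rw [← sc3_rot (fun x y z => mVXZ p v x z * mVYZ p v y z / mVZ p v z),
      ← sc3_rot (fun x y z => p (v, x, y, z))]
  refine Finset.sum_congr rfl fun z _ => ?_
  show _ = mVZ p v z
  have e1 : ∀ x', ∑ y, mVXZ p v x' z * mVYZ p v y z / mVZ p v z
      = mVXZ p v x' z * (∑ y, mVYZ p v y z) / mVZ p v z := by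
    intro x'; rw [← Finset.sum_div, ← Finset.mul_sum]
  rw [Finset.sum_congr rfl fun x' _ => e1 x', ← Finset.sum_div, ← Finset.sum_mul]
  have e2 : (∑ x', mVXZ p v x' z) = mVZ p v z := rfl
  have e3 : (∑ y, mVYZ p v y z) = mVZ p v z := sc2 fun y x => p (v, x, y, z)
  rw [e2, e3]
  rcases eq_or_ne (mVZ p v z) 0 with h | h
  · rw [h]; simp
  · field_simp

end alg

section expand
variable (p : V × X × Y × Z → ℝ)

-- mutInfo must be in scope: we restate it locally? No: it's defined in root in final file.

lemma expandVY :
    (∑ ab : V × Y, (∑ x, ∑ z, p (ab.1, x, ab.2, z)) *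
      Real.logb 2 ((∑ x, ∑ z, p (ab.1, x, ab.2, z)) /
        ((∑ b, ∑ x, ∑ z, p (ab.1, x, b, z)) * (∑ a, ∑ x, ∑ z, p (a, x, ab.2, z))))) =
    ∑ v, ∑ x, ∑ y, ∑ z, p (v, x, y, z) *
      Real.logb 2 (mVY p v y / (mV p v * mY p y)) := by
  rw [Fintype.sum_prod_type]
  refine Finset.sum_congr rfl fun v _ => ?_
  have hden1 : (∑ b, ∑ x, ∑ z, p (v, x, b, z)) = mV p v :=
    sc3_12 fun b x z => p (v, x, b, z)
  calc (∑ y, (∑ x, ∑ z, p (v, x, y, z)) *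
          Real.logb 2 ((∑ x, ∑ z, p (v, x, y, z)) /
            ((∑ b, ∑ x, ∑ z, p (v, x, b, z)) * (∑ a, ∑ x, ∑ z, p (a, x, y, z)))))
      = ∑ y, ∑ x, ∑ z, p (v, x, y, z) *
          Real.logb 2 (mVY p v y / (mV p v * mY p y)) := by
        refine Finset.sum_congr rfl fun y _ => ?_
        rw [hden1]
        show mVY p v y * Real.logb 2 (mVY p v y / (mV p v * mY p y)) = _
        rw [mVY, Finset.sum_mul]
        exact Finset.sum_congr rfl fun x _ => Finset.sum_mul _ _ _
    _ = ∑ x, ∑ y, ∑ z, p (v, x, y, z) *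
          Real.logb 2 (mVY p v y / (mV p v * mY p y)) := Finset.sum_comm


lemma expandVZ :
    (∑ ab : V × Z, (∑ x, ∑ y, p (ab.1, x, y, ab.2)) *
      Real.logb 2 ((∑ x, ∑ y, p (ab.1, x, y, ab.2)) /
        ((∑ b, ∑ x, ∑ y, p (ab.1, x, y, b)) * (∑ a, ∑ x, ∑ y, p (a, x, y, ab.2))))) =
    ∑ v, ∑ x, ∑ y, ∑ z, p (v, x, y, z) *
      Real.logb 2 (mVZ p v z / (mV p v * mZ p z)) := by
  rw [Fintype.sum_prod_type]
  refine Finset.sum_congr rfl fun v _ => ?_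
  have hden1 : (∑ b, ∑ x, ∑ y, p (v, x, y, b)) = mV p v :=
    sc3_rot fun x y z => p (v, x, y, z)
  calc (∑ z, (∑ x, ∑ y, p (v, x, y, z)) *
          Real.logb 2 ((∑ x, ∑ y, p (v, x, y, z)) /
            ((∑ b, ∑ x, ∑ y, p (v, x, y, b)) * (∑ a, ∑ x, ∑ y, p (a, x, y, z)))))
      = ∑ z, ∑ x, ∑ y, p (v, x, y, z) *
          Real.logb 2 (mVZ p v z / (mV p v * mZ p z)) := by
        refine Finset.sum_congr rfl fun z _ => ?_
        rw [hden1]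
        show mVZ p v z * Real.logb 2 (mVZ p v z / (mV p v * mZ p z)) = _
        rw [mVZ, Finset.sum_mul]
        exact Finset.sum_congr rfl fun x _ => Finset.sum_mul _ _ _
    _ = ∑ x, ∑ y, ∑ z, p (v, x, y, z) *
          Real.logb 2 (mVZ p v z / (mV p v * mZ p z)) :=
        sc3_rot fun x y z => p (v, x, y, z) * Real.logb 2 (mVZ p v z / (mV p v * mZ p z))

lemma expandXY :
    (∑ ab : X × Y, (∑ v, ∑ z, p (v, ab.1, ab.2, z)) *
      Real.logb 2 ((∑ v, ∑ z, p (v, ab.1, ab.2, z)) /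
        ((∑ b, ∑ v, ∑ z, p (v, ab.1, b, z)) * (∑ a, ∑ v, ∑ z, p (v, a, ab.2, z))))) =
    ∑ v, ∑ x, ∑ y, ∑ z, p (v, x, y, z) *
      Real.logb 2 (mXY p x y / (mX p x * mY p y)) := by
  rw [Fintype.sum_prod_type]
  calc (∑ x, ∑ y, (∑ v, ∑ z, p (v, x, y, z)) *
          Real.logb 2 ((∑ v, ∑ z, p (v, x, y, z)) /
            ((∑ b, ∑ v, ∑ z, p (v, x, b, z)) * (∑ a, ∑ v, ∑ z, p (v, a, y, z)))))
      = ∑ x, ∑ y, ∑ v, ∑ z, p (v, x, y, z) *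
          Real.logb 2 (mXY p x y / (mX p x * mY p y)) := by
        refine Finset.sum_congr rfl fun x _ => Finset.sum_congr rfl fun y _ => ?_
        have hden1 : (∑ b, ∑ v, ∑ z, p (v, x, b, z)) = mX p x :=
          sc3_12 fun b v z => p (v, x, b, z)
        have hden2 : (∑ a, ∑ v, ∑ z, p (v, a, y, z)) = mY p y :=
          sc3_12 fun a v z => p (v, a, y, z)
        rw [hden1, hden2]
        show mXY p x y * Real.logb 2 (mXY p x y / (mX p x * mY p y)) = _
        rw [mXY, Finset.sum_mul]
        exact Finset.sum_congr rfl fun v _ => Finset.sum_mul _ _ _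
    _ = ∑ x, ∑ v, ∑ y, ∑ z, p (v, x, y, z) *
          Real.logb 2 (mXY p x y / (mX p x * mY p y)) :=
        Finset.sum_congr rfl fun x _ => sc3_12 fun y v z =>
          p (v, x, y, z) * Real.logb 2 (mXY p x y / (mX p x * mY p y))
    _ = ∑ v, ∑ x, ∑ y, ∑ z, p (v, x, y, z) *
          Real.logb 2 (mXY p x y / (mX p x * mY p y)) := Finset.sum_comm

lemma expandXZ :
    (∑ ab : X × Z, (∑ v, ∑ y, p (v, ab.1, y, ab.2)) *
      Real.logb 2 ((∑ v, ∑ y, p (v, ab.1, y, ab.2)) /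
        ((∑ b, ∑ v, ∑ y, p (v, ab.1, y, b)) * (∑ a, ∑ v, ∑ y, p (v, a, y, ab.2))))) =
    ∑ v, ∑ x, ∑ y, ∑ z, p (v, x, y, z) *
      Real.logb 2 (mXZ p x z / (mX p x * mZ p z)) := by
  rw [Fintype.sum_prod_type]
  calc (∑ x, ∑ z, (∑ v, ∑ y, p (v, x, y, z)) *
          Real.logb 2 ((∑ v, ∑ y, p (v, x, y, z)) /
            ((∑ b, ∑ v, ∑ y, p (v, x, y, b)) * (∑ a, ∑ v, ∑ y, p (v, a, y, z)))))
      = ∑ x, ∑ z, ∑ v, ∑ y, p (v, x, y, z) *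
          Real.logb 2 (mXZ p x z / (mX p x * mZ p z)) := by
        refine Finset.sum_congr rfl fun x _ => Finset.sum_congr rfl fun z _ => ?_
        have hden1 : (∑ b, ∑ v, ∑ y, p (v, x, y, b)) = mX p x :=
          sc3_rot fun v y b => p (v, x, y, b)
        have hden2 : (∑ a, ∑ v, ∑ y, p (v, a, y, z)) = mZ p z :=
          sc3_12 fun a v y => p (v, a, y, z)
        rw [hden1, hden2]
        show mXZ p x z * Real.logb 2 (mXZ p x z / (mX p x * mZ p z)) = _
        rw [mXZ, Finset.sum_mul]
        exact Finset.sum_congr rfl fun v _ => Finset.sum_mul _ _ _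
    _ = ∑ x, ∑ v, ∑ y, ∑ z, p (v, x, y, z) *
          Real.logb 2 (mXZ p x z / (mX p x * mZ p z)) :=
        Finset.sum_congr rfl fun x _ => sc3_rot fun v y z =>
          p (v, x, y, z) * Real.logb 2 (mXZ p x z / (mX p x * mZ p z))
    _ = ∑ v, ∑ x, ∑ y, ∑ z, p (v, x, y, z) *
          Real.logb 2 (mXZ p x z / (mX p x * mZ p z)) := Finset.sum_comm

end expand
end S12


/-- if `V → X → (Y,Z₂)` and `X → Y → Z₂` are Markov chains then
`I(V;Y) − I(V;Z₂) ≤ I(X;Y) − I(X;Z₂)`. -/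
theorem stmt12_data_processing
    {V X Y Z : Type} [Fintype V] [Fintype X] [Fintype Y] [Fintype Z]
    (p : V × X × Y × Z → ℝ) (hp : IsPMF p)
    -- Markov chain V → X → (Y,Z₂): (Y,Z₂) ⊥ V | X
    (hMarkov1 : ∀ v x y z,
      p (v, x, y, z) * (∑ v', ∑ y', ∑ z', p (v', x, y', z')) =
        (∑ y', ∑ z', p (v, x, y', z')) * (∑ v', p (v', x, y, z)))
    -- Markov chain X → Y → Z₂: Z₂ ⊥ X | Y
    (hMarkov2 : ∀ x y z,
      (∑ v, p (v, x, y, z)) * (∑ v, ∑ x', ∑ z', p (v, x', y, z')) =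
        (∑ v, ∑ z', p (v, x, y, z')) * (∑ v, ∑ x', p (v, x', y, z))) :
    mutInfo (fun q : V × Y => ∑ x, ∑ z, p (q.1, x, q.2, z)) -
      mutInfo (fun q : V × Z => ∑ x, ∑ y, p (q.1, x, y, q.2)) ≤
    mutInfo (fun q : X × Y => ∑ v, ∑ z, p (v, q.1, q.2, z)) -
      mutInfo (fun q : X × Z => ∑ v, ∑ y, p (v, q.1, y, q.2)) := by
  classical
  obtain ⟨hp0, hp1⟩ := hp
  have hp1' : ∑ v, ∑ x, ∑ y, ∑ z, p (v, x, y, z) = 1 := by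
    rw [← hp1]; simp [Fintype.sum_prod_type]
  have hM1 : ∀ v x y z, p (v, x, y, z) * S12.mX p x = S12.mVX p v x * S12.mXYZ p x y z :=
    fun v x y z => hMarkov1 v x y z
  have hM2 : ∀ x y z, S12.mXYZ p x y z * S12.mY p y = S12.mXY p x y * S12.mYZ p y z :=
    fun x y z => hMarkov2 x y z
  simp only [mutInfo]
  rw [S12.expandVY p, S12.expandVZ p, S12.expandXY p, S12.expandXZ p]
  have hsum : ∑ v, ∑ x, ∑ y, ∑ z,
      (p (v, x, y, z) - S12.mVXZ p v x z * S12.mVYZ p v y z / S12.mVZ p v z) / Real.log 2 ≤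
      ∑ v, ∑ x, ∑ y, ∑ z, p (v, x, y, z) *
        (Real.logb 2 (S12.mXY p x y / (S12.mX p x * S12.mY p y)) +
          Real.logb 2 (S12.mVZ p v z / (S12.mV p v * S12.mZ p z)) -
          Real.logb 2 (S12.mVY p v y / (S12.mV p v * S12.mY p y)) -
          Real.logb 2 (S12.mXZ p x z / (S12.mX p x * S12.mZ p z))) :=
    Finset.sum_le_sum fun v _ => Finset.sum_le_sum fun x _ => Finset.sum_le_sum fun y _ =>
      Finset.sum_le_sum fun z _ => S12.pointwise p hp0 hM1 hM2 v x y z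
  have hzero : ∑ v, ∑ x, ∑ y, ∑ z,
      (p (v, x, y, z) - S12.mVXZ p v x z * S12.mVYZ p v y z / S12.mVZ p v z) / Real.log 2
      = 0 := by
    simp only [← Finset.sum_div, Finset.sum_sub_distrib]
    rw [S12.sumg p, sub_self, zero_div]
  have hsplit : ∑ v, ∑ x, ∑ y, ∑ z, p (v, x, y, z) *
        (Real.logb 2 (S12.mXY p x y / (S12.mX p x * S12.mY p y)) +
          Real.logb 2 (S12.mVZ p v z / (S12.mV p v * S12.mZ p z)) -
          Real.logb 2 (S12.mVY p v y / (S12.mV p v * S12.mY p y)) -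
          Real.logb 2 (S12.mXZ p x z / (S12.mX p x * S12.mZ p z))) =
      (∑ v, ∑ x, ∑ y, ∑ z, p (v, x, y, z) *
        Real.logb 2 (S12.mXY p x y / (S12.mX p x * S12.mY p y))) +
      (∑ v, ∑ x, ∑ y, ∑ z, p (v, x, y, z) *
        Real.logb 2 (S12.mVZ p v z / (S12.mV p v * S12.mZ p z))) -
      (∑ v, ∑ x, ∑ y, ∑ z, p (v, x, y, z) *
        Real.logb 2 (S12.mVY p v y / (S12.mV p v * S12.mY p y))) -
      (∑ v, ∑ x, ∑ y, ∑ z, p (v, x, y, z) *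
        Real.logb 2 (S12.mXZ p x z / (S12.mX p x * S12.mZ p z))) := by
    simp only [mul_add, mul_sub, Finset.sum_add_distrib, Finset.sum_sub_distrib]
  rw [hsplit] at hsum
  rw [hzero] at hsum
  linarith
end
end

section
/- Let U, V, X, Y, Z1 be random variables on finite alphabets such that U → V → X → (Y,Z1) is a Markov chain (i.e., (Y,Z1) is conditionally independent of (U,V) given X, and X is conditionally independent of U given V) and X → Y → Z1 is a Markov chain. Then I(V;Y|U) − I(V;Z1|U) ≤ I(X;Y) − I(X;Z1). -/
open scoped BigOperators
noncomputable section

/-- Conditional mutual information `I(A;B|C)` (in bits) of a joint pmf on `α × β × γ`,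
where the conditioning variable is the third coordinate. -/
def condMutInfo {α β γ : Type*} [Fintype α] [Fintype β] [Fintype γ]
    (p : α × β × γ → ℝ) : ℝ :=
  ∑ x : α × β × γ,
    p x * Real.logb 2
      (((∑ a, ∑ b, p (a, b, x.2.2)) * p x) /
        ((∑ b, p (x.1, b, x.2.2)) * (∑ a, p (a, x.2.1, x.2.2))))

/-!
Under the two Markov conditions the gap `I(X;Y) − I(X;Z) − (I(V;Y|U) − I(V;Z|U))` is the
divergence `∑ p log (p / q)` of `p` from the product of conditionals
`q(u,v,x,y,z) = p(z,u) p(y|z) p(v|y,u) p(x|v,z,u)`: on the support of `p` the four log-ratios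
combine to `log (p / q)` because the Markov conditions give
`p(u,v,x,y,z) p(y) p(x,z) = p(v,x,z,u) p(x,y) p(y,z)`.
Summing out `x`, `v`, `y` in turn shows that `q` has total mass at most that of `p` (at most,
because a conditional with a vanishing denominator is `0`), so Gibbs' inequality makes the
divergence nonnegative.
-/

open Finset Real

section Marginal

variable {α β γ δ : Type*} [Fintype α] [DecidableEq β] [DecidableEq γ] [DecidableEq δ]

def marginal (f : α → β) (p : α → ℝ) (b : β) : ℝ := ∑ a with f a = b, p a

theorem sum_marginal_mul [Fintype β] (f : α → β) (p : α → ℝ) (g : β → ℝ) :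
    ∑ b, marginal f p b * g b = ∑ a, p a * g (f a) := by
  simp_rw [marginal, sum_mul]
  rw [← sum_fiberwise univ f fun a => p a * g (f a)]
  refine sum_congr rfl fun b _ => sum_congr rfl fun a ha => ?_
  rw [(mem_filter.1 ha).2]

theorem sum_marginal [Fintype β] (f : α → β) (p : α → ℝ) :
    ∑ b, marginal f p b = ∑ a, p a := by
  simpa using sum_marginal_mul f p 1

theorem marginal_nonneg {p : α → ℝ} (hp : ∀ a, 0 ≤ p a) (f : α → β) (b : β) : 0 ≤ marginal f p b :=
  sum_nonneg fun a _ => hp a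

theorem marginal_pos {p : α → ℝ} (hp : ∀ a, 0 ≤ p a) (f : α → β) {a : α} (ha : 0 < p a) :
    0 < marginal f p (f a) :=
  ha.trans_le <| single_le_sum (fun a _ => hp a) (mem_filter.2 ⟨mem_univ a, rfl⟩)

theorem sum_marginal_pair_left [Fintype β] (f : α → β) (g : α → γ) (p : α → ℝ) (c : γ) :
    ∑ b, marginal (fun a => (f a, g a)) p (b, c) = marginal g p c := by
  simp only [marginal, sum_filter, Prod.mk.injEq, ite_and]
  rw [sum_comm]
  simp

theorem sum_marginal_pair_right [Fintype γ] (f : α → β) (g : α → γ) (p : α → ℝ) (b : β) :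
    ∑ c, marginal (fun a => (f a, g a)) p (b, c) = marginal f p b := by
  simp only [marginal, sum_filter, Prod.mk.injEq, ite_and]
  rw [sum_comm]
  simp

theorem sum_marginal_triple_mid [Fintype γ] (f : α → β) (g : α → γ) (h : α → δ)
    (p : α → ℝ) (b : β) (d : δ) :
    ∑ c, marginal (fun a => (f a, g a, h a)) p (b, c, d) =
      marginal (fun a => (f a, h a)) p (b, d) := by
  simp only [marginal, sum_filter, Prod.mk.injEq, ite_and]
  rw [sum_comm]
  simp

theorem mutInfo_marginal [Fintype β] [Fintype γ] (f : α → β) (g : α → γ) (p : α → ℝ) :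
    mutInfo (marginal (fun a => (f a, g a)) p) =
      ∑ a, p a * logb 2 (marginal (fun a => (f a, g a)) p (f a, g a) /
        (marginal f p (f a) * marginal g p (g a))) := by
  simp only [mutInfo, sum_marginal_pair_right, sum_marginal_pair_left]
  rw [sum_marginal_mul]

theorem condMutInfo_marginal [Fintype β] [Fintype γ] [Fintype δ] (f : α → β) (g : α → γ)
    (h : α → δ) (p : α → ℝ) :
    condMutInfo (marginal (fun a => (f a, g a, h a)) p) =
      ∑ a, p a * logb 2 (marginal h p (h a) *
          marginal (fun a => (f a, g a, h a)) p (f a, g a, h a) /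
        (marginal (fun a => (f a, h a)) p (f a, h a) *
          marginal (fun a => (g a, h a)) p (g a, h a))) := by
  simp only [condMutInfo, sum_marginal_triple_mid, sum_marginal_pair_left]
  rw [sum_marginal_mul]

end Marginal

section Sums

variable {ι : Type*} [Fintype ι]

theorem sum_div_sum_le_one (f : ι → ℝ) : ∑ i, f i / ∑ j, f j ≤ 1 := by
  rw [← sum_div]
  exact div_self_le_one _

theorem sum_mul_le_sum_of_le_one {f g : ι → ℝ} (hf : ∀ i, 0 ≤ f i) (hg : ∀ i, g i ≤ 1) :
    ∑ i, f i * g i ≤ ∑ i, f i :=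
  sum_le_sum fun i _ => mul_le_of_le_one_right (hf i) (hg i)

theorem sum_mul_logb_div_nonneg {b : ℝ} (hb : 1 < b) {p q : ι → ℝ} (hp : ∀ i, 0 ≤ p i)
    (hq : ∀ i, 0 ≤ q i) (hpq : ∀ i, 0 < p i → 0 < q i) (hsum : ∑ i, q i ≤ ∑ i, p i) :
    0 ≤ ∑ i, p i * logb b (p i / q i) := by
  have hlog : 0 < log b := log_pos hb
  have hterm : ∀ i, (p i - q i) / log b ≤ p i * logb b (p i / q i) := by
    intro i
    rcases (hp i).eq_or_lt with hpi | hpi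
    · rw [← hpi, zero_sub, zero_mul, neg_div]
      exact neg_nonpos.2 (div_nonneg (hq i) hlog.le)
    · have hqi := hpq i hpi
      have hle := one_sub_inv_le_log_of_pos (div_pos hpi hqi)
      rw [inv_div] at hle
      rw [logb, mul_div_assoc', div_le_div_iff_of_pos_right hlog]
      calc p i - q i = p i * (1 - q i / p i) := by field_simp
        _ ≤ p i * log (p i / q i) := mul_le_mul_of_nonneg_left hle hpi.le
  calc 0 ≤ ∑ i, (p i - q i) / log b := by
        rw [← sum_div, sum_sub_distrib]
        exact div_nonneg (sub_nonneg.2 hsum) hlog.le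
    _ ≤ ∑ i, p i * logb b (p i / q i) := sum_le_sum fun i _ => hterm i

end Sums

section MarkovChain

variable {U V X Y Z : Type*} [Fintype U] [Fintype V] [Fintype X] [Fintype Y] [Fintype Z]
  {p : U × V × X × Y × Z → ℝ}

def MarkovUVToXToYZ (p : U × V × X × Y × Z → ℝ) : Prop :=
  ∀ u v x y z,
    p (u, v, x, y, z) * (∑ u', ∑ v', ∑ y', ∑ z', p (u', v', x, y', z')) =
      (∑ y', ∑ z', p (u, v, x, y', z')) * (∑ u', ∑ v', p (u', v', x, y, z))

def MarkovXToYToZ (p : U × V × X × Y × Z → ℝ) : Prop :=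
  ∀ x y z,
    (∑ u, ∑ v, p (u, v, x, y, z)) * (∑ u, ∑ v, ∑ x', ∑ z', p (u, v, x', y, z')) =
      (∑ u, ∑ v, ∑ z', p (u, v, x, y, z')) * (∑ u, ∑ v, ∑ x', p (u, v, x', y, z))

theorem marginal_xy_eq_sum [DecidableEq X] [DecidableEq Y] :
    marginal (fun ω => (ω.2.2.1, ω.2.2.2.1)) p =
      fun q : X × Y => ∑ u, ∑ v, ∑ z, p (u, v, q.1, q.2, z) := by
  ext ⟨x, y⟩
  simp only [marginal, sum_filter, Fintype.sum_prod_type]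
  simp only [Prod.mk.injEq, ite_and, sum_ite_irrel, sum_const_zero, sum_ite_eq', mem_univ, if_true]

theorem marginal_xz_eq_sum [DecidableEq X] [DecidableEq Z] :
    marginal (fun ω => (ω.2.2.1, ω.2.2.2.2)) p =
      fun q : X × Z => ∑ u, ∑ v, ∑ y, p (u, v, q.1, y, q.2) := by
  ext ⟨x, z⟩
  simp only [marginal, sum_filter, Fintype.sum_prod_type]
  simp only [Prod.mk.injEq, ite_and, sum_ite_irrel, sum_const_zero, sum_ite_eq', mem_univ, if_true]

theorem marginal_vyu_eq_sum [DecidableEq U] [DecidableEq V] [DecidableEq Y] :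
    marginal (fun ω => (ω.2.1, ω.2.2.2.1, ω.1)) p =
      fun t : V × Y × U => ∑ x, ∑ z, p (t.2.2, t.1, x, t.2.1, z) := by
  ext ⟨v, y, u⟩
  simp only [marginal, sum_filter, Fintype.sum_prod_type]
  simp only [Prod.mk.injEq, ite_and, sum_ite_irrel, sum_const_zero, sum_ite_eq', mem_univ, if_true]

theorem marginal_vzu_eq_sum [DecidableEq U] [DecidableEq V] [DecidableEq Z] :
    marginal (fun ω => (ω.2.1, ω.2.2.2.2, ω.1)) p =
      fun t : V × Z × U => ∑ x, ∑ y, p (t.2.2, t.1, x, y, t.2.1) := by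
  ext ⟨v, z, u⟩
  simp only [marginal, sum_filter, Fintype.sum_prod_type]
  simp only [Prod.mk.injEq, ite_and, sum_ite_irrel, sum_const_zero, sum_ite_eq', mem_univ, if_true]

theorem marginal_xyz_mul_marginal_y_eq [DecidableEq X] [DecidableEq Y] [DecidableEq Z]
    (hM : MarkovXToYToZ p) (x : X) (y : Y) (z : Z) :
    marginal (fun ω => (ω.2.2.1, ω.2.2.2.1, ω.2.2.2.2)) p (x, y, z) *
        marginal (fun ω => ω.2.2.2.1) p y =
      marginal (fun ω => (ω.2.2.1, ω.2.2.2.1)) p (x, y) *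
        marginal (fun ω => (ω.2.2.2.1, ω.2.2.2.2)) p (y, z) := by
  simp only [marginal, sum_filter, Fintype.sum_prod_type]
  -- `sum_ite_irrel` cannot pull out a test on a single coordinate (its `Decidable` instance
  -- mentions the inner summation variables), so that coordinate's sum is moved innermost instead
  simp only [Prod.mk.injEq, ite_and, sum_ite_irrel, sum_const_zero, sum_ite_eq', mem_univ, if_true,
    sum_comm (γ := Y) (α := Z)]
  exact hM x y z

variable [DecidableEq U] [DecidableEq V] [DecidableEq X] [DecidableEq Y] [DecidableEq Z]

theorem mul_marginal_x_eq (hM : MarkovUVToXToYZ p) (u : U) (v : V) (x : X) (y : Y) (z : Z) :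
    p (u, v, x, y, z) * marginal (fun ω => ω.2.2.1) p x =
      marginal (fun ω => (ω.1, ω.2.1, ω.2.2.1)) p (u, v, x) *
        marginal (fun ω => (ω.2.2.1, ω.2.2.2.1, ω.2.2.2.2)) p (x, y, z) := by
  simp only [marginal, sum_filter, Fintype.sum_prod_type]
  simp only [Prod.mk.injEq, ite_and, sum_ite_irrel, sum_const_zero, sum_ite_eq', mem_univ, if_true,
    sum_comm (γ := X) (α := Y), sum_comm (γ := X) (α := Z)]
  exact hM u v x y z

theorem marginal_vxzu_mul_marginal_x_eq (hM : MarkovUVToXToYZ p) (u : U) (v : V) (x : X)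
    (z : Z) :
    marginal (fun ω => (ω.2.1, ω.2.2.1, ω.2.2.2.2, ω.1)) p (v, x, z, u) *
        marginal (fun ω => ω.2.2.1) p x =
      marginal (fun ω => (ω.1, ω.2.1, ω.2.2.1)) p (u, v, x) *
        marginal (fun ω => (ω.2.2.1, ω.2.2.2.2)) p (x, z) := by
  have hsum : marginal (fun ω => (ω.2.1, ω.2.2.1, ω.2.2.2.2, ω.1)) p (v, x, z, u) =
      ∑ y, p (u, v, x, y, z) := by
    simp only [marginal, sum_filter, Fintype.sum_prod_type]
    simp only [Prod.mk.injEq, ite_and, sum_ite_irrel, sum_const_zero, sum_ite_eq', mem_univ,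
      if_true]
  have h := Fintype.sum_congr _ _ fun y => mul_marginal_x_eq hM u v x y z
  rw [← sum_mul, ← mul_sum, sum_marginal_triple_mid] at h
  rwa [hsum]

theorem mul_marginal_y_mul_marginal_xz_eq (hp : ∀ ω, 0 ≤ p ω) (hM1 : MarkovUVToXToYZ p)
    (hM3 : MarkovXToYToZ p) {u : U} {v : V} {x : X} {y : Y} {z : Z}
    (hpos : 0 < p (u, v, x, y, z)) :
    p (u, v, x, y, z) * marginal (fun ω => ω.2.2.2.1) p y *
        marginal (fun ω => (ω.2.2.1, ω.2.2.2.2)) p (x, z) =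
      marginal (fun ω => (ω.2.1, ω.2.2.1, ω.2.2.2.2, ω.1)) p (v, x, z, u) *
        marginal (fun ω => (ω.2.2.1, ω.2.2.2.1)) p (x, y) *
        marginal (fun ω => (ω.2.2.2.1, ω.2.2.2.2)) p (y, z) := by
  have hX : 0 < marginal (fun ω => ω.2.2.1) p x := marginal_pos hp (fun ω => ω.2.2.1) hpos
  have hA := mul_marginal_x_eq hM1 u v x y z
  have hB := marginal_xyz_mul_marginal_y_eq hM3 x y z
  have hC := marginal_vxzu_mul_marginal_x_eq hM1 u v x z
  set mY := marginal (fun ω => ω.2.2.2.1) p y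
  set mXZ := marginal (fun ω => (ω.2.2.1, ω.2.2.2.2)) p (x, z)
  set mXY := marginal (fun ω => (ω.2.2.1, ω.2.2.2.1)) p (x, y)
  set mYZ := marginal (fun ω => (ω.2.2.2.1, ω.2.2.2.2)) p (y, z)
  set mUVX := marginal (fun ω => (ω.1, ω.2.1, ω.2.2.1)) p (u, v, x)
  apply mul_right_cancel₀ hX.ne'
  linear_combination (mY * mXZ) * hA + (mUVX * mXZ) * hB - (mXY * mYZ) * hC

def chainDensity (p : U × V × X × Y × Z → ℝ) : U × V × X × Y × Z → ℝ
  | (u, v, x, y, z) =>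
    marginal (fun ω => (ω.2.2.2.2, ω.1)) p (z, u) *
      (marginal (fun ω => (ω.2.2.2.1, ω.2.2.2.2)) p (y, z) /
        marginal (fun ω => ω.2.2.2.2) p z) *
      (marginal (fun ω => (ω.2.1, ω.2.2.2.1, ω.1)) p (v, y, u) /
        marginal (fun ω => (ω.2.2.2.1, ω.1)) p (y, u)) *
      (marginal (fun ω => (ω.2.1, ω.2.2.1, ω.2.2.2.2, ω.1)) p (v, x, z, u) /
        marginal (fun ω => (ω.2.1, ω.2.2.2.2, ω.1)) p (v, z, u))

theorem chainDensity_nonneg (hp : ∀ ω, 0 ≤ p ω) : ∀ ω, 0 ≤ chainDensity p ω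
  | (_, _, _, _, _) =>
    mul_nonneg (mul_nonneg (mul_nonneg (marginal_nonneg hp _ _)
      (div_nonneg (marginal_nonneg hp _ _) (marginal_nonneg hp _ _)))
      (div_nonneg (marginal_nonneg hp _ _) (marginal_nonneg hp _ _)))
      (div_nonneg (marginal_nonneg hp _ _) (marginal_nonneg hp _ _))

theorem chainDensity_pos (hp : ∀ ω, 0 ≤ p ω) : ∀ ω, 0 < p ω → 0 < chainDensity p ω
  | (_, _, _, _, _), hpos =>
    mul_pos (mul_pos (mul_pos (marginal_pos hp _ hpos)
      (div_pos (marginal_pos hp _ hpos) (marginal_pos hp _ hpos)))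
      (div_pos (marginal_pos hp _ hpos) (marginal_pos hp _ hpos)))
      (div_pos (marginal_pos hp _ hpos) (marginal_pos hp _ hpos))

theorem sum_chainDensity_le (hp : ∀ ω, 0 ≤ p ω) : ∑ ω, chainDensity p ω ≤ ∑ ω, p ω := by
  have hx : ∀ u v z, ∑ x, marginal (fun ω => (ω.2.1, ω.2.2.1, ω.2.2.2.2, ω.1)) p (v, x, z, u) /
      marginal (fun ω => (ω.2.1, ω.2.2.2.2, ω.1)) p (v, z, u) ≤ 1 := by
    intro u v z
    rw [← sum_marginal_triple_mid (γ := X) _ _ _ p v (z, u)]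
    exact sum_div_sum_le_one _
  have hv : ∀ u y, ∑ v, marginal (fun ω => (ω.2.1, ω.2.2.2.1, ω.1)) p (v, y, u) /
      marginal (fun ω => (ω.2.2.2.1, ω.1)) p (y, u) ≤ 1 := by
    intro u y
    rw [← sum_marginal_pair_left (β := V) _ _ p (y, u)]
    exact sum_div_sum_le_one _
  have hy : ∀ z, ∑ y, marginal (fun ω => (ω.2.2.2.1, ω.2.2.2.2)) p (y, z) /
      marginal (fun ω => ω.2.2.2.2) p z ≤ 1 := by
    intro z
    rw [← sum_marginal_pair_left (β := Y) _ _ p z]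
    exact sum_div_sum_le_one _
  have hzu : ∑ z, ∑ u, marginal (fun ω => (ω.2.2.2.2, ω.1)) p (z, u) = ∑ ω, p ω := by
    rw [← sum_marginal (fun ω => (ω.2.2.2.2, ω.1)) p, Fintype.sum_prod_type]
  rw [← hzu]
  -- reorder the sums as `z, u, y, v, x`, outermost first
  simp only [Fintype.sum_prod_type, chainDensity, sum_comm (γ := U) (α := Z),
    sum_comm (γ := V) (α := Z), sum_comm (γ := X) (α := Z), sum_comm (γ := Y) (α := Z),
    sum_comm (γ := V) (α := Y), sum_comm (γ := X) (α := Y), mul_assoc, ← mul_sum]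
  refine sum_le_sum fun z _ =>
    sum_mul_le_sum_of_le_one (fun u => marginal_nonneg hp _ _) fun u => ?_
  refine (sum_mul_le_sum_of_le_one (fun y => div_nonneg (marginal_nonneg hp _ _)
    (marginal_nonneg hp _ _)) fun y => ?_).trans (hy z)
  exact (sum_mul_le_sum_of_le_one (fun v => div_nonneg (marginal_nonneg hp _ _)
    (marginal_nonneg hp _ _)) fun v => hx u v z).trans (hv u y)

theorem logb_div_chainDensity (hp : ∀ ω, 0 ≤ p ω) (hM1 : MarkovUVToXToYZ p)
    (hM3 : MarkovXToYToZ p) {u : U} {v : V} {x : X} {y : Y} {z : Z}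
    (hpos : 0 < p (u, v, x, y, z)) :
    logb 2 (p (u, v, x, y, z) / chainDensity p (u, v, x, y, z)) =
      logb 2 (marginal (fun ω => (ω.2.2.1, ω.2.2.2.1)) p (x, y) /
          (marginal (fun ω => ω.2.2.1) p x * marginal (fun ω => ω.2.2.2.1) p y)) -
        logb 2 (marginal (fun ω => (ω.2.2.1, ω.2.2.2.2)) p (x, z) /
          (marginal (fun ω => ω.2.2.1) p x * marginal (fun ω => ω.2.2.2.2) p z)) -
        (logb 2 (marginal (fun ω => ω.1) p u *
              marginal (fun ω => (ω.2.1, ω.2.2.2.1, ω.1)) p (v, y, u) /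
            (marginal (fun ω => (ω.2.1, ω.1)) p (v, u) *
              marginal (fun ω => (ω.2.2.2.1, ω.1)) p (y, u))) -
          logb 2 (marginal (fun ω => ω.1) p u *
              marginal (fun ω => (ω.2.1, ω.2.2.2.2, ω.1)) p (v, z, u) /
            (marginal (fun ω => (ω.2.1, ω.1)) p (v, u) *
              marginal (fun ω => (ω.2.2.2.2, ω.1)) p (z, u)))) := by
  have key := mul_marginal_y_mul_marginal_xz_eq hp hM1 hM3 hpos
  rw [← logb_div, ← logb_div, ← logb_div]
  · congr 1
    simp only [chainDensity]
    field_simp [(marginal_pos hp _ hpos).ne']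
    linear_combination key
  all_goals simp [(marginal_pos hp _ hpos).ne']

theorem mutInfo_sub_sub_condMutInfo_sub_eq (hp : ∀ ω, 0 ≤ p ω) (hM1 : MarkovUVToXToYZ p)
    (hM3 : MarkovXToYToZ p) :
    mutInfo (marginal (fun ω => (ω.2.2.1, ω.2.2.2.1)) p) -
        mutInfo (marginal (fun ω => (ω.2.2.1, ω.2.2.2.2)) p) -
        (condMutInfo (marginal (fun ω => (ω.2.1, ω.2.2.2.1, ω.1)) p) -
          condMutInfo (marginal (fun ω => (ω.2.1, ω.2.2.2.2, ω.1)) p)) =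
      ∑ ω, p ω * logb 2 (p ω / chainDensity p ω) := by
  rw [mutInfo_marginal, mutInfo_marginal, condMutInfo_marginal, condMutInfo_marginal,
    ← sum_sub_distrib, ← sum_sub_distrib, ← sum_sub_distrib]
  refine Fintype.sum_congr _ _ fun ⟨u, v, x, y, z⟩ => ?_
  rcases (hp (u, v, x, y, z)).eq_or_lt with h | h
  · simp [← h]
  · rw [logb_div_chainDensity hp hM1 hM3 h]
    ring

end MarkovChain

theorem stmt13_conditional_data_processing_general
    {U V X Y Z : Type} [Fintype U] [Fintype V] [Fintype X] [Fintype Y] [Fintype Z]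
    (p : U × V × X × Y × Z → ℝ) (hp : IsPMF p)
    -- (Y,Z₁) ⊥ (U,V) | X
    (hMarkov1 : ∀ u v x y z,
      p (u, v, x, y, z) * (∑ u', ∑ v', ∑ y', ∑ z', p (u', v', x, y', z')) =
        (∑ y', ∑ z', p (u, v, x, y', z')) * (∑ u', ∑ v', p (u', v', x, y, z)))
    -- X → Y → Z₁: Z₁ ⊥ X | Y
    (hMarkov3 : ∀ x y z,
      (∑ u, ∑ v, p (u, v, x, y, z)) * (∑ u, ∑ v, ∑ x', ∑ z', p (u, v, x', y, z')) =
        (∑ u, ∑ v, ∑ z', p (u, v, x, y, z')) * (∑ u, ∑ v, ∑ x', p (u, v, x', y, z))) :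
    condMutInfo (fun t : V × Y × U => ∑ x, ∑ z, p (t.2.2, t.1, x, t.2.1, z)) -
      condMutInfo (fun t : V × Z × U => ∑ x, ∑ y, p (t.2.2, t.1, x, y, t.2.1)) ≤
    mutInfo (fun q : X × Y => ∑ u, ∑ v, ∑ z, p (u, v, q.1, q.2, z)) -
      mutInfo (fun q : X × Z => ∑ u, ∑ v, ∑ y, p (u, v, q.1, y, q.2)) := by
  classical
  rw [← marginal_xy_eq_sum, ← marginal_xz_eq_sum, ← marginal_vyu_eq_sum, ← marginal_vzu_eq_sum,
    ← sub_nonneg, mutInfo_sub_sub_condMutInfo_sub_eq hp.1 hMarkov1 hMarkov3]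
  exact sum_mul_logb_div_nonneg one_lt_two hp.1 (chainDensity_nonneg hp.1) (chainDensity_pos hp.1)
    (sum_chainDensity_le hp.1)

/-- if `U → V → X → (Y,Z₁)` and `X → Y → Z₁` are Markov chains then
`I(V;Y|U) − I(V;Z₁|U) ≤ I(X;Y) − I(X;Z₁)`. -/
theorem stmt13_conditional_data_processing
    {U V X Y Z : Type} [Fintype U] [Fintype V] [Fintype X] [Fintype Y] [Fintype Z]
    (p : U × V × X × Y × Z → ℝ) (hp : IsPMF p)
    -- (Y,Z₁) ⊥ (U,V) | X
    (hMarkov1 : ∀ u v x y z,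
      p (u, v, x, y, z) * (∑ u', ∑ v', ∑ y', ∑ z', p (u', v', x, y', z')) =
        (∑ y', ∑ z', p (u, v, x, y', z')) * (∑ u', ∑ v', p (u', v', x, y, z)))
    -- X ⊥ U | V
    (hMarkov2 : ∀ u v x,
      (∑ y, ∑ z, p (u, v, x, y, z)) * (∑ u', ∑ x', ∑ y, ∑ z, p (u', v, x', y, z)) =
        (∑ x', ∑ y, ∑ z, p (u, v, x', y, z)) * (∑ u', ∑ y, ∑ z, p (u', v, x, y, z)))
    -- X → Y → Z₁: Z₁ ⊥ X | Y
    (hMarkov3 : ∀ x y z,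
      (∑ u, ∑ v, p (u, v, x, y, z)) * (∑ u, ∑ v, ∑ x', ∑ z', p (u, v, x', y, z')) =
        (∑ u, ∑ v, ∑ z', p (u, v, x, y, z')) * (∑ u, ∑ v, ∑ x', p (u, v, x', y, z))) :
    condMutInfo (fun t : V × Y × U => ∑ x, ∑ z, p (t.2.2, t.1, x, t.2.1, z)) -
      condMutInfo (fun t : V × Z × U => ∑ x, ∑ y, p (t.2.2, t.1, x, y, t.2.1)) ≤
    mutInfo (fun q : X × Y => ∑ u, ∑ v, ∑ z, p (u, v, q.1, q.2, z)) -
      mutInfo (fun q : X × Z => ∑ u, ∑ v, ∑ y, p (u, v, q.1, y, q.2)) :=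
  stmt13_conditional_data_processing_general p hp hMarkov1 hMarkov3
end
end

section
/- Fix 0 ≤ α2 ≤ α1 ≤ 1 and ε > 0 such that 1 − α1 − ε > 0. For all sufficiently large n (such that the indicated quantities are integers), there exists a binary matrix H over GF(2) with n columns, formed by stacking a matrix H1 with n(1−α1−ε) rows on top of a matrix H2 with n(α1−α2) rows, such that: (i) H has full row rank; (ii) for every subset Γ ⊆ {1,…,n} with |Γ| = n(1−α2), the dimension of the GF(2)-span of the columns of H indexed by Γ is at least n(1−α2−ε) − 3/ε; and (iii) for every subset Γ ⊆ {1,…,n} with |Γ| = n(1−α1), the dimension of the GF(2)-span of the columns of H1 indexed by Γ is at least n(1−α1−ε) − 3/ε. -/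
/-!
Counting argument. Encode the matrix by its tuple of columns `G : Fin n → 𝔽₂^k`. If the columns
indexed by `Γ` span a subspace of codimension at least `t` in `𝔽₂^k'` (after projecting onto the
rows under consideration), then `t` independent functionals vanish on them. For fixed `Γ` and
fixed functionals (at most `2^n · 2^(k' t)` choices) only a `2^(-t |Γ|)` fraction of all tuples
has this property. Taking `t = ⌈2/ε⌉` and using `|Γ| - k' = nε`, each of the three failures
(full row rank being the case `t = 1`, `Γ = univ`) occurs for at most a quarter of all matrices.
-/

noncomputable section

/-- The dimension of the `GF(2)`-span of the columns (indexed by `Γ`) of a matrix. -/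
def colSpanDim {k : Type*} {n : ℕ} (H : Matrix k (Fin n) (ZMod 2)) (Γ : Finset (Fin n)) : ℕ :=
  Module.finrank (ZMod 2) (Submodule.span (ZMod 2) (H.transpose '' ↑Γ))

open Matrix Module Finset Fintype

theorem exists_linearIndependent_dotProduct_eq_zero {K κ ι : Type*} [Field K] [Fintype κ]
    [Finite ι] (s : ι → κ → K) {t : ℕ}
    (h : finrank K (Submodule.span K (Set.range s)) + t ≤ card κ) :
    ∃ v : Fin t → κ → K, LinearIndependent K v ∧ ∀ i j, v i ⬝ᵥ s j = 0 := by
  let A : Matrix ι κ K := Matrix.of s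
  have hker : t ≤ finrank K (LinearMap.ker A.mulVecLin) := by
    have hdim := LinearMap.finrank_range_add_finrank_ker A.mulVecLin
    have hA : A.rank = finrank K (Submodule.span K (Set.range s)) := rank_eq_finrank_span_row A
    rw [finrank_pi] at hdim
    unfold Matrix.rank at hA
    omega
  obtain ⟨f, hf⟩ := exists_linearIndependent_of_le_finrank hker
  refine ⟨fun i => f i, hf.map' _ (Submodule.ker_subtype _), fun i j => ?_⟩
  rw [dotProduct_comm]
  exact congr_fun (LinearMap.mem_ker.mp (f i).2) j

theorem card_filter_forall_mem {ι α : Type*} [Fintype ι] [DecidableEq ι] [Fintype α]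
    [DecidableEq α] (Γ : Finset ι) (S : Finset α) :
    #{G : ι → α | ∀ j ∈ Γ, G j ∈ S} = #S ^ #Γ * card α ^ #Γᶜ := by
  have : ({G : ι → α | ∀ j ∈ Γ, G j ∈ S} : Finset _) =
      piFinset fun j => if j ∈ Γ then S else univ := by
    ext G; simp only [mem_filter, mem_univ, true_and, mem_piFinset]
    refine forall_congr' fun j => ?_
    split_ifs <;> simp_all
  rw [this, card_piFinset]
  simp only [apply_ite, card_univ, prod_ite, prod_const, filter_mem_eq_inter, univ_inter]
  congr 3
  ext
  simp

def HasIndepAnnihilators {K κ κ' ι : Type*} [Field K] [Fintype κ']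
    (π : (κ → K) →ₗ[K] (κ' → K)) (t : ℕ) (Γ : Finset ι) (G : ι → κ → K) : Prop :=
  ∃ v : Fin t → κ' → K, LinearIndependent K v ∧ ∀ j ∈ Γ, ∀ i, v i ⬝ᵥ π (G j) = 0

section Counting

variable {K : Type*} [Field K] [Fintype K] [DecidableEq K] {κ κ' ι : Type*} [Fintype κ]
  [DecidableEq κ] [Fintype κ'] [Fintype ι] [DecidableEq ι]

theorem card_filter_dotProduct_comp_eq_zero_mul_pow {t : ℕ} {v : Fin t → κ' → K}
    (hv : LinearIndependent K v) {π : (κ → K) →ₗ[K] (κ' → K)} (hπ : Function.Surjective π) :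
    #{c : κ → K | ∀ i, v i ⬝ᵥ π c = 0} * card K ^ t = card K ^ card κ := by
  classical
  set L := (Matrix.of v).mulVecLin ∘ₗ π
  have hrange : finrank K (LinearMap.range L) = t := by
    rw [LinearMap.range_comp_of_range_eq_top _ (LinearMap.range_eq_top.mpr hπ)]
    exact hv.rank_matrix (M := Matrix.of v) |>.trans (Fintype.card_fin t)
  have hdim := LinearMap.finrank_range_add_finrank_ker L
  rw [finrank_pi] at hdim
  have hker : #{c : κ → K | ∀ i, v i ⬝ᵥ π c = 0} = card (LinearMap.ker L) := by
    rw [← Fintype.card_subtype]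
    exact Fintype.card_congr (Equiv.subtypeEquivRight fun c => by simp [L, funext_iff, mulVec])
  rw [hker, card_eq_pow_finrank (K := K), ← pow_add]
  congr 1
  omega

theorem card_filter_forall_dotProduct_comp_eq_zero_mul_pow {t : ℕ} {v : Fin t → κ' → K}
    (hv : LinearIndependent K v) {π : (κ → K) →ₗ[K] (κ' → K)} (hπ : Function.Surjective π)
    (Γ : Finset ι) :
    #{G : ι → κ → K | ∀ j ∈ Γ, ∀ i, v i ⬝ᵥ π (G j) = 0} * card K ^ (t * #Γ)
      = card K ^ (card κ * card ι) := by
  have hcol := card_filter_dotProduct_comp_eq_zero_mul_pow hv hπ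
  have := card_filter_forall_mem Γ {c : κ → K | ∀ i, v i ⬝ᵥ π c = 0}
  simp only [mem_filter, mem_univ, true_and] at this
  rw [this, card_fun, mul_right_comm, pow_mul, ← mul_pow, hcol, ← pow_mul, ← pow_mul, ← pow_add,
    ← mul_add, card_add_card_compl]

open Classical in
theorem card_filter_exists_hasIndepAnnihilators_mul_pow_le {π : (κ → K) →ₗ[K] (κ' → K)}
    (hπ : Function.Surjective π) (t : ℕ) (𝒢 : Finset (Finset ι)) {r : ℕ}
    (h𝒢 : ∀ Γ ∈ 𝒢, #Γ = r) :
    #{G : ι → κ → K | ∃ Γ ∈ 𝒢, HasIndepAnnihilators π t Γ G} * card K ^ (t * r)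
      ≤ #𝒢 * card K ^ (card κ' * t) * card K ^ (card κ * card ι) := by
  set P := 𝒢 ×ˢ ({v : Fin t → κ' → K | LinearIndependent K v} : Finset _)
  have hsub : ({G : ι → κ → K | ∃ Γ ∈ 𝒢, HasIndepAnnihilators π t Γ G} : Finset _) ⊆
      P.biUnion fun p => {G | ∀ j ∈ p.1, ∀ i, p.2 i ⬝ᵥ π (G j) = 0} := by
    intro G hG
    obtain ⟨Γ, hΓ, v, hv, hG⟩ := (mem_filter.mp hG).2
    exact mem_biUnion.mpr ⟨(Γ, v), mem_product.mpr ⟨hΓ, by simpa using hv⟩, by simpa using hG⟩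
  have hP : #P ≤ #𝒢 * card K ^ (card κ' * t) := by
    have hcard : card (Fin t → κ' → K) = card K ^ (card κ' * t) := by simp [pow_mul]
    rw [card_product, ← hcard]
    exact Nat.mul_le_mul_left _ (card_filter_le _ _)
  calc _ ≤ (∑ p ∈ P, #{G : ι → κ → K | ∀ j ∈ p.1, ∀ i, p.2 i ⬝ᵥ π (G j) = 0})
          * card K ^ (t * r) :=
        Nat.mul_le_mul_right _ ((card_le_card hsub).trans card_biUnion_le)
    _ = #P * card K ^ (card κ * card ι) := by
        rw [sum_mul, Finset.card_eq_sum_ones, sum_mul]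
        refine sum_congr rfl fun p hp => ?_
        obtain ⟨hΓ, hv⟩ := mem_product.mp hp
        rw [one_mul, ← h𝒢 _ hΓ]
        exact card_filter_forall_dotProduct_comp_eq_zero_mul_pow (by simpa using hv) hπ _
    _ ≤ _ := Nat.mul_le_mul_right _ hP

open Classical in
theorem four_mul_card_filter_exists_hasIndepAnnihilators_le {π : (κ → K) →ₗ[K] (κ' → K)}
    (hπ : Function.Surjective π) {t r : ℕ} {𝒢 : Finset (Finset ι)} (h𝒢 : ∀ Γ ∈ 𝒢, #Γ = r)
    (h : 4 * #𝒢 * card K ^ (card κ' * t) ≤ card K ^ (t * r)) :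
    4 * #{G : ι → κ → K | ∃ Γ ∈ 𝒢, HasIndepAnnihilators π t Γ G} ≤ card (ι → κ → K) := by
  have hcount := card_filter_exists_hasIndepAnnihilators_mul_pow_le hπ t 𝒢 h𝒢
  rw [card_fun, card_fun, ← pow_mul]
  refine Nat.le_of_mul_le_mul_right ?_ (pow_pos (card_pos (α := K)) (t * r))
  rw [mul_assoc, mul_comm (card K ^ (card κ * card ι))]
  refine (Nat.mul_le_mul_left 4 hcount).trans ?_
  rw [← mul_assoc, ← mul_assoc]
  exact Nat.mul_le_mul_right _ h

end Counting

theorem hasIndepAnnihilators_of_colSpanDim_add_le {κ κ' : Type*} [Fintype κ'] {n t : ℕ}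
    {π : (κ → ZMod 2) →ₗ[ZMod 2] (κ' → ZMod 2)} {G : Fin n → κ → ZMod 2}
    {H : Matrix κ' (Fin n) (ZMod 2)} (hH : ∀ j, Hᵀ j = π (G j)) {Γ : Finset (Fin n)}
    (h : colSpanDim H Γ + t ≤ card κ') : HasIndepAnnihilators π t Γ G := by
  have hrange : Set.range (fun j : Γ => H.col j) = Hᵀ '' Γ := (Set.image_eq_range _ _).symm
  obtain ⟨v, hv, hvH⟩ := exists_linearIndependent_dotProduct_eq_zero (fun j : Γ => H.col j)
    (by rwa [hrange])
  exact ⟨v, hv, fun j hj i => hH j ▸ hvH i ⟨j, hj⟩⟩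

theorem Matrix.rank_eq_colSpanDim_univ {κ : Type*} [Fintype κ] {n : ℕ}
    (H : Matrix κ (Fin n) (ZMod 2)) : H.rank = colSpanDim H univ := by
  rw [rank_eq_finrank_span_cols, colSpanDim, coe_univ, ← Set.image_univ]
  rfl

theorem exists_notMem_of_four_mul_card_le {α : Type*} [Fintype α] [Nonempty α]
    {A B C : Finset α}
    (hA : 4 * #A ≤ card α) (hB : 4 * #B ≤ card α) (hC : 4 * #C ≤ card α) :
    ∃ a, a ∉ A ∧ a ∉ B ∧ a ∉ C := by
  classical
  have hunion := (card_union_le (A ∪ B) C).trans (Nat.add_le_add_right (card_union_le A B) _)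
  have hα : 0 < card α := card_pos
  obtain ⟨a, -, ha⟩ := exists_mem_notMem_of_card_lt_card (s := A ∪ B ∪ C) (t := univ)
    (by rw [card_univ]; omega)
  simp only [mem_union, not_or] at ha
  exact ⟨a, ha.1.1, ha.1.2, ha.2⟩

theorem four_mul_choose_mul_two_pow_le {n m t r : ℕ} (h : n + 2 + m * t ≤ t * r) :
    4 * n.choose r * 2 ^ (m * t) ≤ 2 ^ (t * r) :=
  calc _ ≤ 2 ^ 2 * 2 ^ n * 2 ^ (m * t) := by gcongr; exacts [le_rfl, Nat.choose_le_two_pow n r]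
    _ ≤ 2 ^ (t * r) := by rw [← pow_add, ← pow_add]; exact Nat.pow_le_pow_right two_pos (by omega)

theorem exists_fromRows_rank_eq_and_colSpanDim_add_gt {κ₁ κ₂ : Type*} [Fintype κ₁]
    [DecidableEq κ₁] [Fintype κ₂] [DecidableEq κ₂] {n t r₁ r₂ : ℕ}
    (hrank : card κ₁ + card κ₂ + 2 ≤ n) (h₂ : n + 2 + (card κ₁ + card κ₂) * t ≤ t * r₂)
    (h₁ : n + 2 + card κ₁ * t ≤ t * r₁) :
    ∃ (H₁ : Matrix κ₁ (Fin n) (ZMod 2)) (H₂ : Matrix κ₂ (Fin n) (ZMod 2)),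
      (fromRows H₁ H₂).rank = card κ₁ + card κ₂ ∧
      (∀ Γ : Finset (Fin n), #Γ = r₂ →
        card κ₁ + card κ₂ < colSpanDim (fromRows H₁ H₂) Γ + t) ∧
      (∀ Γ : Finset (Fin n), #Γ = r₁ → card κ₁ < colSpanDim H₁ Γ + t) := by
  classical
  have hπ₁ : Function.Surjective (LinearMap.funLeft (ZMod 2) (ZMod 2) (Sum.inl : κ₁ → κ₁ ⊕ κ₂)) :=
    LinearMap.funLeft_surjective_of_injective _ _ _ Sum.inl_injective
  have hB₁ := four_mul_card_filter_exists_hasIndepAnnihilators_le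
    (π := LinearMap.id (M := κ₁ ⊕ κ₂ → ZMod 2)) Function.surjective_id (t := 1)
    (𝒢 := {univ}) (fun _ hΓ => (mem_singleton.mp hΓ) ▸ Finset.card_fin n) (by
      simp only [card_singleton, ZMod.card, card_sum, mul_one, one_mul]
      rw [show 4 = 2 ^ 2 by rfl, ← pow_add]
      exact Nat.pow_le_pow_right two_pos (by omega))
  have hB₂ := four_mul_card_filter_exists_hasIndepAnnihilators_le
    (π := LinearMap.id (M := κ₁ ⊕ κ₂ → ZMod 2)) Function.surjective_id (t := t)
    (𝒢 := powersetCard r₂ (univ : Finset (Fin n))) (fun _ hΓ => (mem_powersetCard.mp hΓ).2)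
    (by simpa using four_mul_choose_mul_two_pow_le h₂)
  have hB₃ := four_mul_card_filter_exists_hasIndepAnnihilators_le hπ₁ (t := t)
    (𝒢 := powersetCard r₁ (univ : Finset (Fin n))) (fun _ hΓ => (mem_powersetCard.mp hΓ).2)
    (by simpa using four_mul_choose_mul_two_pow_le h₁)
  obtain ⟨G, hG₁, hG₂, hG₃⟩ := exists_notMem_of_four_mul_card_le hB₁ hB₂ hB₃
  simp only [mem_filter, mem_univ, true_and] at hG₁ hG₂ hG₃
  let M : Matrix (κ₁ ⊕ κ₂) (Fin n) (ZMod 2) := Matrix.of fun x j => G j x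
  refine ⟨M.toRows₁, M.toRows₂, ?_⟩
  rw [fromRows_toRows]
  refine ⟨?_, fun Γ hΓ => ?_, fun Γ hΓ => ?_⟩
  · refine le_antisymm ((rank_le_card_height M).trans_eq card_sum) (not_lt.mp fun hlt => hG₁ ?_)
    refine ⟨univ, mem_singleton_self _, ?_⟩
    exact hasIndepAnnihilators_of_colSpanDim_add_le (H := M) (fun _ => rfl)
      (by rw [← rank_eq_colSpanDim_univ, card_sum]; omega)
  · refine not_le.mp fun hle => hG₂ ⟨Γ, mem_powersetCard.mpr ⟨subset_univ _, hΓ⟩, ?_⟩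
    exact hasIndepAnnihilators_of_colSpanDim_add_le (H := M) (fun _ => rfl) (by rwa [card_sum])
  · refine not_le.mp fun hle => hG₃ ⟨Γ, mem_powersetCard.mpr ⟨subset_univ _, hΓ⟩, ?_⟩
    exact hasIndepAnnihilators_of_colSpanDim_add_le (H := M.toRows₁) (fun _ => rfl) hle

theorem stmt16_exists_good_two_level_coset_matrix_general (α₁ α₂ ε : ℝ)
    (hα₂ : 0 ≤ α₂) (hε : 0 < ε) :
    ∃ N : ℕ, ∀ n ≥ N, ∀ k₁ k₂ r₁ r₂ : ℕ,
      (k₁ : ℝ) = n * (1 - α₁ - ε) → (k₂ : ℝ) = n * (α₁ - α₂) →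
      (r₁ : ℝ) = n * (1 - α₁) → (r₂ : ℝ) = n * (1 - α₂) →
      ∃ (H₁ : Matrix (Fin k₁) (Fin n) (ZMod 2)) (H₂ : Matrix (Fin k₂) (Fin n) (ZMod 2)),
        (Matrix.fromRows H₁ H₂).rank = k₁ + k₂ ∧
        (∀ Γ : Finset (Fin n), Γ.card = r₂ →
          (n : ℝ) * (1 - α₂ - ε) - 3 / ε ≤ colSpanDim (Matrix.fromRows H₁ H₂) Γ) ∧
        (∀ Γ : Finset (Fin n), Γ.card = r₁ →
          (n : ℝ) * (1 - α₁ - ε) - 3 / ε ≤ colSpanDim H₁ Γ) := by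
  refine ⟨⌈2 / ε⌉₊ + 2, fun n hn k₁ k₂ r₁ r₂ hk₁ hk₂ hr₁ hr₂ => ?_⟩
  set t := ⌈2 / ε⌉₊
  have ht : (t : ℝ) < 3 / ε + 1 :=
    (Nat.ceil_lt_add_one (by positivity)).trans_le (by gcongr; norm_num)
  have htε : 2 ≤ (t : ℝ) * ε := (div_le_iff₀ hε).mp (Nat.le_ceil _)
  have hn : (t : ℝ) + 2 ≤ n := by exact_mod_cast hn
  have hnα₂ : 0 ≤ (n : ℝ) * α₂ := by positivity
  have htnε : 2 * (n : ℝ) ≤ t * (n * ε) := by nlinarith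
  have h₀ : (k₁ + k₂ + 2 : ℝ) ≤ n := by nlinarith
  have h₂ : (n + 2 + (k₁ + k₂) * t : ℝ) ≤ t * r₂ := by nlinarith
  have h₁ : (n + 2 + k₁ * t : ℝ) ≤ t * r₁ := by nlinarith
  obtain ⟨H₁, H₂, hrank, hH, hH₁⟩ :=
    exists_fromRows_rank_eq_and_colSpanDim_add_gt (κ₁ := Fin k₁) (κ₂ := Fin k₂) (t := t)
      (by simp only [Fintype.card_fin]; exact_mod_cast h₀)
      (by simp only [Fintype.card_fin]; exact_mod_cast h₂)
      (by simp only [Fintype.card_fin]; exact_mod_cast h₁)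
  simp only [Fintype.card_fin] at hrank hH hH₁
  refine ⟨H₁, H₂, hrank, fun Γ hΓ => ?_, fun Γ hΓ => ?_⟩
  · have : (k₁ + k₂ + 1 : ℝ) ≤ colSpanDim (fromRows H₁ H₂) Γ + t := by exact_mod_cast hH Γ hΓ
    linarith
  · have : (k₁ + 1 : ℝ) ≤ colSpanDim H₁ Γ + t := by exact_mod_cast hH₁ Γ hΓ
    linarith

/-- for `0 ≤ α₂ ≤ α₁ ≤ 1` and `ε > 0` with `1 − α₁ − ε > 0`, for all
sufficiently large `n` making the indicated quantities integers, there exist binary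
matrices `H₁` (with `n(1−α₁−ε)` rows) and `H₂` (with `n(α₁−α₂)` rows) whose vertical
stack `H` has full row rank, every `n(1−α₂)` columns of `H` span a subspace of dimension
at least `n(1−α₂−ε) − 3/ε`, and every `n(1−α₁)` columns of `H₁` span a subspace of
dimension at least `n(1−α₁−ε) − 3/ε`. -/
theorem stmt16_exists_good_two_level_coset_matrix (α₁ α₂ ε : ℝ)
    (hα₂ : 0 ≤ α₂) (hα₂₁ : α₂ ≤ α₁) (hα₁ : α₁ ≤ 1) (hε : 0 < ε)
    (hpos : 0 < 1 - α₁ - ε) :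
    ∃ N : ℕ, ∀ n ≥ N, ∀ k₁ k₂ r₁ r₂ : ℕ,
      (k₁ : ℝ) = n * (1 - α₁ - ε) → (k₂ : ℝ) = n * (α₁ - α₂) →
      (r₁ : ℝ) = n * (1 - α₁) → (r₂ : ℝ) = n * (1 - α₂) →
      ∃ (H₁ : Matrix (Fin k₁) (Fin n) (ZMod 2)) (H₂ : Matrix (Fin k₂) (Fin n) (ZMod 2)),
        (Matrix.fromRows H₁ H₂).rank = k₁ + k₂ ∧
        (∀ Γ : Finset (Fin n), Γ.card = r₂ →
          (n : ℝ) * (1 - α₂ - ε) - 3 / ε ≤ colSpanDim (Matrix.fromRows H₁ H₂) Γ) ∧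
        (∀ Γ : Finset (Fin n), Γ.card = r₁ →
          (n : ℝ) * (1 - α₁ - ε) - 3 / ε ≤ colSpanDim H₁ Γ) :=
  stmt16_exists_good_two_level_coset_matrix_general α₁ α₂ ε hα₂ hε
end
end
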